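/- For every n >= 1, the number of n-step preimages of the block 000 under elementary CA rule 130 equals 4^{n+1} - 3. -/

import Mathlib

set_option linter.unreachableTactic false
set_option linter.unusedTactic false
set_option maxHeartbeats 1000000

/-- Local rule of elementary CA 130: f(x,y,z)=1 iff (x,y,z)=(0,0,1) or (1,1,1). -/
def f130 (x y z : Bool) : Bool := (!x && !y && z) || (x && y && z)

/-- Block evolution operator: maps a_0...a_{m-1} to the length m-2 string with
entries f(a_i,a_{i+1},a_{i+2}). -/
def bstep (a : List Bool) : List Bool :=
  (List.range (a.length - 2)).map
    (fun i => f130 (a.getD i false) (a.getD (i+1) false) (a.getD (i+2) false))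

lemma length_bstep (a : List Bool) : (bstep a).length = a.length - 2 := by
  simp [bstep]

lemma getD_eq (l : List Bool) (i : ℕ) :
    l.getD i false = if h : i < l.length then l[i] else false := by
  split
  · exact List.getD_eq_getElem l false ‹_›
  · exact List.getD_eq_default l false (by omega)

lemma getD_take (l : List Bool) (k i : ℕ) (h : i < k) :
    (l.take k).getD i false = l.getD i false := by
  rcases lt_or_ge i l.length with hl | hl
  · rw [List.getD_eq_getElem _ _ (by simp; omega), List.getD_eq_getElem _ _ hl]
    exact List.getElem_take
  · rw [List.getD_eq_default _ _ (by simp; omega), List.getD_eq_default _ _ hl]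

lemma getD_drop (l : List Bool) (j i : ℕ) :
    (l.drop j).getD i false = l.getD (j + i) false := by
  rcases lt_or_ge (j + i) l.length with hl | hl
  · rw [List.getD_eq_getElem _ _ (by simp; omega), List.getD_eq_getElem _ _ hl]
    exact List.getElem_drop ..
  · rw [List.getD_eq_default _ _ (by simp; omega), List.getD_eq_default _ _ hl]

lemma getD_bstep (a : List Bool) (i : ℕ) (h : i < a.length - 2) :
    (bstep a).getD i false
      = f130 (a.getD i false) (a.getD (i+1) false) (a.getD (i+2) false) := by
  rw [getD_eq]
  split
  · simp [bstep]
  · rw [length_bstep] at *; omega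

lemma ext_getD : ∀ (a b : List Bool), a.length = b.length →
    (∀ i, a.getD i false = b.getD i false) → a = b := by
  intro a
  induction a with
  | nil => intro b hl _; cases b <;> simp_all
  | cons x t ih =>
    intro b hl h
    cases b with
    | nil => simp at hl
    | cons y u =>
      have h0 := h 0
      simp only [List.getD_cons_zero] at h0
      have : t = u := ih u (by simpa using hl) (fun i => by simpa using h (i+1))
      rw [h0, this]

lemma bstep_eq_iff (a c : List Bool) (m : ℕ) (ha : a.length = m + 2) (hc : c.length = m) :
    bstep a = c ↔ ∀ i < m, f130 (a.getD i false) (a.getD (i+1) false) (a.getD (i+2) false)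
      = c.getD i false := by
  constructor
  · intro h i hi
    rw [← h, getD_bstep a i (by omega)]
  · intro h
    apply ext_getD _ _ (by rw [length_bstep]; omega)
    intro i
    rcases lt_or_ge i m with hi | hi
    · rw [getD_bstep a i (by omega), h i hi]
    · rw [List.getD_eq_default _ _ (by rw [length_bstep]; omega),
        List.getD_eq_default _ _ (by omega)]

lemma bstep_take (a : List Bool) (m : ℕ) : bstep (a.take (m+2)) = (bstep a).take m := by
  apply ext_getD
  · simp only [length_bstep, List.length_take]; omega
  · intro i
    rcases lt_or_ge i ((a.take (m+2)).length - 2) with hi | hi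
    · have hi' : i < m := by simp only [List.length_take] at hi; omega
      have hi'' : i < a.length - 2 := by simp only [List.length_take] at hi; omega
      rw [getD_bstep _ i hi, getD_take _ _ _ hi', getD_bstep _ i hi'',
        getD_take _ _ _ (by omega), getD_take _ _ _ (by omega), getD_take _ _ _ (by omega)]
    · rw [List.getD_eq_default _ _ (by rw [length_bstep]; omega)]
      rcases lt_or_ge i m with h2 | h2
      · have : a.length ≤ i + 2 := by simp only [List.length_take] at hi; omega
        rw [getD_take _ _ _ h2, List.getD_eq_default _ _ (by rw [length_bstep]; omega)]
      · rw [List.getD_eq_default _ _ (by rw [List.length_take]; omega)]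

lemma bstep_drop (a : List Bool) (j : ℕ) : bstep (a.drop j) = (bstep a).drop j := by
  apply ext_getD
  · simp only [length_bstep, List.length_drop]; omega
  · intro i
    rcases lt_or_ge i ((a.drop j).length - 2) with hi | hi
    · have hd : i < (bstep a).length - j := by
        simp only [List.length_drop] at hi; rw [length_bstep]; omega
      rw [getD_bstep _ i hi, getD_drop, getD_drop, getD_drop, getD_drop,
        getD_bstep a (j+i) (by simp only [List.length_drop] at hi; omega)]
      congr 2 <;> omega
    · rw [List.getD_eq_default _ _ (by rw [length_bstep]; omega), getD_drop,
        List.getD_eq_default _ _ (by rw [length_bstep]; simp only [List.length_drop] at hi; omega)]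

lemma length_iter (n : ℕ) (a : List Bool) : (bstep^[n] a).length = a.length - 2*n := by
  induction n generalizing a with
  | zero => simp
  | succ n ih =>
    rw [Function.iterate_succ_apply, ih, length_bstep]
    omega

lemma iter_take (n : ℕ) (a : List Bool) (m : ℕ) :
    bstep^[n] (a.take (m + 2*n)) = (bstep^[n] a).take m := by
  induction n generalizing a m with
  | zero => simp
  | succ n ih =>
    rw [Function.iterate_succ_apply, Function.iterate_succ_apply,
      show m + 2*(n+1) = (m + 2*n) + 2 by ring, bstep_take, ih]

lemma iter_drop (n : ℕ) (a : List Bool) (j : ℕ) :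
    bstep^[n] (a.drop j) = (bstep^[n] a).drop j := by
  induction n generalizing a with
  | zero => simp
  | succ n ih =>
    rw [Function.iterate_succ_apply, Function.iterate_succ_apply, bstep_drop, ih]

lemma f130_true (x y z : Bool) : f130 x y z = true ↔ (x = y ∧ z = true) := by
  cases x <;> cases y <;> cases z <;> simp [f130]

lemma getD_replicate (n : ℕ) (x : Bool) (i : ℕ) :
    (List.replicate n x).getD i false = if i < n then x else false := by
  split
  · rw [List.getD_eq_getElem _ _ (by simpa using ‹_›)]
    simp
  · rw [List.getD_eq_default _ _ (by simp; omega)]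

lemma bstep_ones (a : List Bool) (m : ℕ) (hm : 2 ≤ m) (ha : a.length = m+2) :
    bstep a = List.replicate m true ↔ a = List.replicate (m+2) true := by
  rw [bstep_eq_iff a _ m ha (by simp)]
  constructor
  · intro h
    have key : ∀ i < m, a.getD i false = a.getD (i+1) false ∧ a.getD (i+2) false = true := by
      intro i hi
      have := h i hi
      rw [getD_replicate, if_pos hi] at this
      exact (f130_true _ _ _).mp this
    have h2 : a.getD 2 false = true := (key 0 (by omega)).2
    have h1 : a.getD 1 false = true := by rw [(key 1 hm).1]; exact (key 0 (by omega)).2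
    have h0 : a.getD 0 false = true := by rw [(key 0 (by omega)).1]; exact h1
    apply ext_getD _ _ (by simp [ha])
    intro i
    rw [getD_replicate]
    split
    · rcases i with _ | _ | i
      · exact h0
      · exact h1
      · exact (key i (by omega)).2
    · exact List.getD_eq_default _ _ (by omega)
  · intro h i hi
    subst h
    rw [getD_replicate, getD_replicate, getD_replicate, getD_replicate,
      if_pos (by omega : i < m+2), if_pos (by omega : i+1 < m+2),
      if_pos (by omega : i+2 < m+2), if_pos hi]
    decide

lemma getD_ones_zero (m i : ℕ) :
    (List.replicate m true ++ [false]).getD i false = if i < m then true else false := by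
  rcases lt_or_ge i m with h | h
  · rw [List.getD_append _ _ _ _ (by simpa using h), getD_replicate, if_pos h]
  · rw [if_neg (by omega)]
    rcases eq_or_lt_of_le h with rfl | h2
    · rw [List.getD_append_right _ _ _ _ (by simp)]
      simp
    · exact List.getD_eq_default _ _ (by simp; omega)

lemma bstep_ones_zero (a : List Bool) (m : ℕ) (hm : 2 ≤ m) (ha : a.length = m+3) :
    bstep a = List.replicate m true ++ [false] ↔
      a = List.replicate (m+2) true ++ [false] := by
  rw [bstep_eq_iff a _ (m+1) (by omega) (by simp)]
  constructor
  · intro h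
    have key : ∀ i < m, a.getD i false = a.getD (i+1) false ∧ a.getD (i+2) false = true := by
      intro i hi
      have := h i (by omega)
      rw [getD_ones_zero, if_pos hi] at this
      exact (f130_true _ _ _).mp this
    have h2 : a.getD 2 false = true := (key 0 (by omega)).2
    have h1 : a.getD 1 false = true := by rw [(key 1 hm).1]; exact (key 0 (by omega)).2
    have h0 : a.getD 0 false = true := by rw [(key 0 (by omega)).1]; exact h1
    have hme : ∀ j < m + 2, a.getD j false = true := by
      intro j hj
      rcases j with _ | _ | j
      · exact h0
      · exact h1
      · exact (key j (by omega)).2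
    have hlast : a.getD (m+2) false = false := by
      have := h m (by omega)
      rw [getD_ones_zero, if_neg (by omega), hme m (by omega), hme (m+1) (by omega)] at this
      simpa [f130] using this
    apply ext_getD _ _ (by simp [ha])
    intro j
    rw [getD_ones_zero]
    split
    · exact hme j ‹_›
    · rcases eq_or_lt_of_le (by omega : m + 2 ≤ j) with rfl | hj
      · exact hlast
      · exact List.getD_eq_default _ _ (by omega)
  · intro h i hi
    subst h
    rw [getD_ones_zero, getD_ones_zero, getD_ones_zero, getD_ones_zero]
    rcases lt_or_ge i m with h | h
    · rw [if_pos (by omega), if_pos (by omega), if_pos (by omega), if_pos h]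
      decide
    · have : i = m := by omega
      subst this
      rw [if_pos (by omega), if_pos (by omega), if_neg (by omega), if_neg (by omega)]
      decide

lemma getD_zero_ones (m i : ℕ) :
    (false :: List.replicate m true).getD i false
      = if 1 ≤ i ∧ i < m + 1 then true else false := by
  rcases i with _ | i
  · simp
  · rw [List.getD_cons_succ, getD_replicate]
    split <;> split <;> first | rfl | omega

lemma bstep_zero_ones (a : List Bool) (m : ℕ) (hm : 2 ≤ m) (ha : a.length = m+3) :
    bstep a = false :: List.replicate m true ↔
      a = false :: List.replicate (m+2) true := by
  rw [bstep_eq_iff a _ (m+1) (by omega) (by simp)]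
  constructor
  · intro h
    have key : ∀ i, 1 ≤ i → i < m + 1 →
        a.getD i false = a.getD (i+1) false ∧ a.getD (i+2) false = true := by
      intro i h1 h2
      have := h i (by omega)
      rw [getD_zero_ones, if_pos ⟨h1, h2⟩] at this
      exact (f130_true _ _ _).mp this
    have h3 : a.getD 3 false = true := (key 1 (by omega) (by omega)).2
    have h2 : a.getD 2 false = true := by
      rw [(key 2 (by omega) (by omega)).1]; exact h3
    have h1 : a.getD 1 false = true := by
      rw [(key 1 (by omega) (by omega)).1]; exact h2
    have h0 : a.getD 0 false = false := by
      have := h 0 (by omega)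
      rw [getD_zero_ones, if_neg (by omega), h1, h2] at this
      cases hx : a.getD 0 false
      · rfl
      · rw [hx] at this; simp [f130] at this
    apply ext_getD _ _ (by simp [ha])
    intro j
    rcases j with _ | j
    · simpa using h0
    · rw [List.getD_cons_succ, getD_replicate]
      split
      · rcases j with _ | _ | j
        · exact h1
        · exact h2
        · exact (key (j+1) (by omega) (by omega)).2
      · exact List.getD_eq_default _ _ (by omega)
  · intro h i hi
    subst h
    simp only [getD_zero_ones]
    rcases Nat.eq_zero_or_pos i with rfl | hpos
    · rw [if_neg (by omega), if_pos (by omega), if_pos (by omega), if_neg (by omega)]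
      decide
    · rw [if_pos (by omega), if_pos (by omega), if_pos (by omega), if_pos (by omega)]
      decide

lemma f130_x01 (y : Bool) : f130 y false true = !y := by cases y <;> rfl
lemma f130_x11 (y : Bool) : f130 y true true = y := by cases y <;> rfl

lemma getD_xz (y : Bool) (k i : ℕ) :
    (y :: false :: List.replicate k true).getD i false
      = if i = 0 then y else if 2 ≤ i ∧ i < k+2 then true else false := by
  rcases i with _ | _ | i
  · simp
  · simp
  · rw [List.getD_cons_succ, List.getD_cons_succ, getD_replicate,
      if_neg (by omega : ¬ (i+2 = 0))]
    split <;> split <;> first | rfl | omega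

lemma bstep_x_zero_ones (a : List Bool) (m : ℕ) (x : Bool)
    (hm : 2 ≤ m ∨ (m = 1 ∧ x = true)) (ha : a.length = m+4) :
    bstep a = x :: false :: List.replicate m true ↔
      a = (!x) :: false :: List.replicate (m+2) true := by
  rw [bstep_eq_iff a _ (m+2) (by omega) (by simp)]
  constructor
  · intro h
    have key : ∀ i, 2 ≤ i → i < m + 2 →
        a.getD i false = a.getD (i+1) false ∧ a.getD (i+2) false = true := by
      intro i h1 h2
      have := h i (by omega)
      rw [getD_xz, if_neg (by omega), if_pos ⟨h1, h2⟩] at this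
      exact (f130_true _ _ _).mp this
    have h23 : a.getD 2 false = true ∧ a.getD 3 false = true := by
      rcases hm with hm2 | ⟨rfl, rfl⟩
      · have k2 := key 2 (by omega) (by omega)
        have k3 := key 3 (by omega) (by omega)
        have h3 : a.getD 3 false = true := by rw [k3.1]; exact k2.2
        exact ⟨by rw [k2.1]; exact h3, h3⟩
      · have k2 := key 2 (by omega) (by omega)
        have h0 := h 0 (by omega)
        rw [getD_xz, if_pos rfl] at h0
        have h2 : a.getD 2 false = true := ((f130_true _ _ _).mp h0).2
        exact ⟨h2, by rw [← k2.1]; exact h2⟩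
    have htail : ∀ j, 4 ≤ j → j < m + 4 → a.getD j false = true := by
      intro j h4 hj
      have := (key (j-2) (by omega) (by omega)).2
      rw [show j - 2 + 2 = j by omega] at this
      exact this
    have h1 : a.getD 1 false = false := by
      have := h 1 (by omega)
      rw [getD_xz, if_neg (by omega), if_neg (by omega), h23.1, h23.2, f130_x11] at this
      exact this
    have h0 : a.getD 0 false = !x := by
      have := h 0 (by omega)
      rw [getD_xz, if_pos rfl, h1, h23.1, f130_x01] at this
      rw [← this]
      simp
    apply ext_getD _ _ (by simp [ha])
    intro j
    rw [getD_xz]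
    rcases j with _ | _ | j
    · simpa using h0
    · simpa using h1
    · rw [if_neg (by omega)]
      split
      · rcases j with _ | _ | j
        · exact h23.1
        · exact h23.2
        · exact htail (j+4) (by omega) (by omega)
      · exact List.getD_eq_default _ _ (by omega)
  · intro h i hi
    subst h
    simp only [getD_xz]
    rcases i with _ | _ | i
    · rw [if_pos rfl, if_neg (by omega), if_neg (by omega), if_neg (by omega),
        if_pos (by omega), if_pos rfl]
      cases x <;> rfl
    · rw [if_neg (by omega), if_neg (by omega), if_neg (by omega), if_pos (by omega),
        if_neg (by omega), if_pos (by omega), if_neg (by omega), if_neg (by omega)]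
      rfl
    · rw [if_neg (by omega), if_pos (by omega), if_neg (by omega), if_pos (by omega),
        if_neg (by omega), if_pos (by omega), if_neg (by omega), if_pos (by omega)]
      rfl

def xbit : ℕ → Bool
  | 0 => true
  | n+1 => !(xbit n)

lemma uniq111 (n : ℕ) (w : List Bool) :
    (w.length = 2*n+3 ∧ bstep^[n] w = [true,true,true]) ↔
      w = List.replicate (2*n+3) true := by
  induction n generalizing w with
  | zero => simp [List.replicate]; intro h; simp [h]
  | succ n ih =>
    constructor
    · rintro ⟨hl, hb⟩
      rw [Function.iterate_succ_apply] at hb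
      have h1 : bstep w = List.replicate (2*n+3) true :=
        (ih (bstep w)).mp ⟨by rw [length_bstep]; omega, hb⟩
      have := (bstep_ones w (2*n+3) (by omega) (by omega)).mp h1
      rw [this]
      congr 1 <;> omega
    · intro h
      subst h
      refine ⟨by simp <;> omega, ?_⟩
      rw [Function.iterate_succ_apply]
      have h1 : bstep (List.replicate (2*(n+1)+3) true) = List.replicate (2*n+3) true := by
        apply (bstep_ones _ (2*n+3) (by omega) (by simp; omega)).mpr
        congr 1 <;> omega
      rw [h1]
      exact ((ih _).mpr rfl).2

lemma uniq110 (n : ℕ) (w : List Bool) :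
    (w.length = 2*n+3 ∧ bstep^[n] w = [true,true,false]) ↔
      w = List.replicate (2*n+2) true ++ [false] := by
  induction n generalizing w with
  | zero => simp [List.replicate]; intro h; simp [h]
  | succ n ih =>
    constructor
    · rintro ⟨hl, hb⟩
      rw [Function.iterate_succ_apply] at hb
      have h1 : bstep w = List.replicate (2*n+2) true ++ [false] :=
        (ih (bstep w)).mp ⟨by rw [length_bstep]; omega, hb⟩
      have := (bstep_ones_zero w (2*n+2) (by omega) (by omega)).mp h1
      rw [this]
      congr 2 <;> omega
    · intro h
      subst h
      refine ⟨by simp <;> omega, ?_⟩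
      rw [Function.iterate_succ_apply]
      have h1 : bstep (List.replicate (2*(n+1)+2) true ++ [false])
          = List.replicate (2*n+2) true ++ [false] := by
        apply (bstep_ones_zero _ (2*n+2) (by omega) (by simp; omega)).mpr
        congr 2 <;> omega
      rw [h1]
      exact ((ih _).mpr rfl).2

lemma uniq011 (n : ℕ) (w : List Bool) :
    (w.length = 2*n+3 ∧ bstep^[n] w = [false,true,true]) ↔
      w = false :: List.replicate (2*n+2) true := by
  induction n generalizing w with
  | zero => simp [List.replicate]; intro h; simp [h]
  | succ n ih =>
    constructor
    · rintro ⟨hl, hb⟩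
      rw [Function.iterate_succ_apply] at hb
      have h1 : bstep w = false :: List.replicate (2*n+2) true :=
        (ih (bstep w)).mp ⟨by rw [length_bstep]; omega, hb⟩
      have := (bstep_zero_ones w (2*n+2) (by omega) (by omega)).mp h1
      rw [this]
      congr 2 <;> omega
    · intro h
      subst h
      refine ⟨by simp <;> omega, ?_⟩
      rw [Function.iterate_succ_apply]
      have h1 : bstep (false :: List.replicate (2*(n+1)+2) true)
          = false :: List.replicate (2*n+2) true := by
        apply (bstep_zero_ones _ (2*n+2) (by omega) (by simp; omega)).mpr
        congr 2 <;> omega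
      rw [h1]
      exact ((ih _).mpr rfl).2

lemma xbit_hm (n : ℕ) : 2 ≤ 2*n+1 ∨ (2*n+1 = 1 ∧ xbit n = true) := by
  cases n with
  | zero => exact Or.inr ⟨rfl, rfl⟩
  | succ k => exact Or.inl (by omega)

lemma uniq101 (n : ℕ) (w : List Bool) :
    (w.length = 2*n+3 ∧ bstep^[n] w = [true,false,true]) ↔
      w = xbit n :: false :: List.replicate (2*n+1) true := by
  induction n generalizing w with
  | zero => simp [List.replicate, xbit]; intro h; simp [h]
  | succ n ih =>
    constructor
    · rintro ⟨hl, hb⟩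
      rw [Function.iterate_succ_apply] at hb
      have h1 : bstep w = xbit n :: false :: List.replicate (2*n+1) true :=
        (ih (bstep w)).mp ⟨by rw [length_bstep]; omega, hb⟩
      have := (bstep_x_zero_ones w (2*n+1) (xbit n)
        (xbit_hm n)
        (by omega)).mp h1
      rw [this, show xbit (n+1) = !(xbit n) from rfl]
      congr 3 <;> omega
    · intro h
      subst h
      refine ⟨by simp <;> omega, ?_⟩
      rw [Function.iterate_succ_apply]
      have h1 : bstep (xbit (n+1) :: false :: List.replicate (2*(n+1)+1) true)
          = xbit n :: false :: List.replicate (2*n+1) true := by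
        apply (bstep_x_zero_ones _ (2*n+1) (xbit n)
          (xbit_hm n)
          (by simp; omega)).mpr
        rw [show xbit (n+1) = !(xbit n) from rfl]
        congr 3 <;> omega
      rw [h1]
      exact ((ih _).mpr rfl).2

def allb : ℕ → Finset (List Bool)
  | 0 => {[]}
  | L+1 => Finset.image₂ List.cons Finset.univ (allb L)

lemma mem_allb (L : ℕ) (w : List Bool) : w ∈ allb L ↔ w.length = L := by
  induction L generalizing w with
  | zero => cases w <;> simp [allb]
  | succ L ih =>
    cases w with
    | nil => simp [allb]
    | cons x t =>
      simp only [allb, Finset.mem_image₂, Finset.mem_univ, true_and, List.length_cons]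
      constructor
      · rintro ⟨y, u, hu, heq⟩
        cases heq
        simp [(ih _).mp hu]
      · intro h
        exact ⟨x, t, (ih t).mpr (by omega), rfl⟩

lemma card_allb (L : ℕ) : (allb L).card = 2^L := by
  induction L with
  | zero => rfl
  | succ L ih =>
    rw [show allb (L+1) = Finset.image₂ List.cons Finset.univ (allb L) from rfl,
      Finset.card_image₂ (fun a b c d => by simp), ih]
    simp [Fintype.card_bool]
    ring

def cnt (n : ℕ) (b : List Bool) : ℕ :=
  ((allb (2*n+3)).filter (fun w => bstep^[n] w = b)).card

def A (n : ℕ) : ℕ :=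
  ((allb (2*n+1)).filter (fun v => bstep^[n] v = [true])).card

lemma cnt_eq_one (n : ℕ) (b u : List Bool)
    (h : ∀ w, (w.length = 2*n+3 ∧ bstep^[n] w = b) ↔ w = u) : cnt n b = 1 := by
  rw [cnt, Finset.card_eq_one]
  refine ⟨u, ?_⟩
  ext w
  simp only [Finset.mem_filter, mem_allb, Finset.mem_singleton]
  exact h w

lemma cnt111 (n : ℕ) : cnt n [true,true,true] = 1 := cnt_eq_one n _ _ (uniq111 n)
lemma cnt110 (n : ℕ) : cnt n [true,true,false] = 1 := cnt_eq_one n _ _ (uniq110 n)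
lemma cnt011 (n : ℕ) : cnt n [false,true,true] = 1 := cnt_eq_one n _ _ (uniq011 n)
lemma cnt101 (n : ℕ) : cnt n [true,false,true] = 1 := cnt_eq_one n _ _ (uniq101 n)

lemma allb3 : allb 3 = {[false,false,false],[false,false,true],[false,true,false],
    [false,true,true],[true,false,false],[true,false,true],[true,true,false],
    [true,true,true]} := by decide

lemma total_sum (n : ℕ) : ∑ b ∈ allb 3, cnt n b = 2^(2*n+3) := by
  rw [← card_allb (2*n+3)]
  exact (Finset.card_eq_sum_card_fiberwise (fun w hw => by
    rw [Finset.mem_coe, mem_allb] at hw ⊢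
    rw [length_iter]
    omega)).symm

lemma bit0_count (n : ℕ) :
    ((allb (2*n+3)).filter (fun w => (bstep^[n] w).take 1 = [true])).card = 4 * A n := by
  have key : ((allb (2*n+3)).filter (fun w => (bstep^[n] w).take 1 = [true])).card
      = ((allb 2) ×ˢ ((allb (2*n+1)).filter (fun v => bstep^[n] v = [true]))).card := by
    apply Finset.card_nbij' (fun w => (w.drop (2*n+1), w.take (2*n+1)))
      (fun p => p.2 ++ p.1)
    · intro w hw
      rw [Finset.mem_coe, Finset.mem_filter, mem_allb] at hw
      rw [Finset.mem_coe, Finset.mem_product, mem_allb, Finset.mem_filter, mem_allb]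
      refine ⟨by simp [hw.1], by simp [hw.1], ?_⟩
      rw [show 2*n+1 = 1+2*n by ring, iter_take, hw.2]
    · intro p hp
      rw [Finset.mem_coe, Finset.mem_product, mem_allb, Finset.mem_filter, mem_allb] at hp
      rw [Finset.mem_coe, Finset.mem_filter, mem_allb]
      refine ⟨by simp [hp.1, hp.2.1], ?_⟩
      rw [← iter_take n (p.2 ++ p.1) 1, show 1+2*n = 2*n+1 by ring,
        List.take_left' hp.2.1, hp.2.2]
    · intro w _
      exact List.take_append_drop _ w
    · intro p hp
      rw [Finset.mem_coe, Finset.mem_product, mem_allb, Finset.mem_filter, mem_allb] at hp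
      beta_reduce
      rw [List.drop_left' hp.2.1, List.take_left' hp.2.1]
  rw [key, Finset.card_product, card_allb]
  rfl

lemma bit2_count (n : ℕ) :
    ((allb (2*n+3)).filter (fun w => (bstep^[n] w).drop 2 = [true])).card = 4 * A n := by
  have key : ((allb (2*n+3)).filter (fun w => (bstep^[n] w).drop 2 = [true])).card
      = ((allb 2) ×ˢ ((allb (2*n+1)).filter (fun v => bstep^[n] v = [true]))).card := by
    apply Finset.card_nbij' (fun w => (w.take 2, w.drop 2)) (fun p => p.1 ++ p.2)
    · intro w hw
      rw [Finset.mem_coe, Finset.mem_filter, mem_allb] at hw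
      rw [Finset.mem_coe, Finset.mem_product, mem_allb, Finset.mem_filter, mem_allb]
      refine ⟨by simp [hw.1], by simp [hw.1] <;> omega, ?_⟩
      rw [iter_drop, hw.2]
    · intro p hp
      rw [Finset.mem_coe, Finset.mem_product, mem_allb, Finset.mem_filter, mem_allb] at hp
      rw [Finset.mem_coe, Finset.mem_filter, mem_allb]
      refine ⟨by simp [hp.1, hp.2.1] <;> omega, ?_⟩
      rw [← iter_drop, List.drop_left' hp.1, hp.2.2]
    · intro w _
      exact List.take_append_drop _ w
    · intro p hp
      rw [Finset.mem_coe, Finset.mem_product, mem_allb, Finset.mem_filter, mem_allb] at hp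
      beta_reduce
      rw [List.drop_left' hp.1, List.take_left' hp.1]
  rw [key, Finset.card_product, card_allb]
  rfl

lemma bit1_count (n : ℕ) :
    ((allb (2*n+3)).filter
      (fun w => ((bstep^[n] w).drop 1).take 1 = [true])).card = 4 * A n := by
  have key : ((allb (2*n+3)).filter
        (fun w => ((bstep^[n] w).drop 1).take 1 = [true])).card
      = (((allb 1) ×ˢ (allb 1)) ×ˢ
          ((allb (2*n+1)).filter (fun v => bstep^[n] v = [true]))).card := by
    apply Finset.card_nbij'
      (fun w => ((w.take 1, w.drop (2*n+2)), (w.drop 1).take (2*n+1)))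
      (fun p => p.1.1 ++ p.2 ++ p.1.2)
    · intro w hw
      rw [Finset.mem_coe, Finset.mem_filter, mem_allb] at hw
      rw [Finset.mem_coe, Finset.mem_product, Finset.mem_product, mem_allb, mem_allb,
        Finset.mem_filter, mem_allb]
      refine ⟨⟨by simp [hw.1], by simp [hw.1]⟩, by simp [hw.1], ?_⟩
      rw [show 2*n+1 = 1+2*n by ring, iter_take, iter_drop, hw.2]
    · intro p hp
      rw [Finset.mem_coe, Finset.mem_product, Finset.mem_product, mem_allb, mem_allb,
        Finset.mem_filter, mem_allb] at hp
      rw [Finset.mem_coe, Finset.mem_filter, mem_allb]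
      refine ⟨by simp [hp.1.1, hp.1.2, hp.2.1]; omega, ?_⟩
      beta_reduce
      rw [← iter_drop, List.append_assoc, List.drop_left' hp.1.1,
        ← iter_take n _ 1, show 1+2*n = 2*n+1 by ring,
        List.take_left' hp.2.1, hp.2.2]
    · intro w _
      have h1 : (w.drop 1).take (2*n+1) ++ w.drop (2*n+2) = w.drop 1 := by
        rw [show (2:ℕ)*n+2 = 1+(2*n+1) by ring, ← List.drop_drop]
        exact List.take_append_drop _ _
      simp only []
      rw [List.append_assoc, h1]
      exact List.take_append_drop _ w
    · intro p hp
      rw [Finset.mem_coe, Finset.mem_product, Finset.mem_product, mem_allb, mem_allb,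
        Finset.mem_filter, mem_allb] at hp
      have hd1 : (p.1.1 ++ p.2 ++ p.1.2).drop 1 = p.2 ++ p.1.2 := by
        rw [List.append_assoc]
        exact List.drop_left' hp.1.1
      have hd2 : (p.1.1 ++ p.2 ++ p.1.2).drop (2*n+2) = p.1.2 := by
        rw [show (2:ℕ)*n+2 = 1+(2*n+1) by ring, ← List.drop_drop, hd1]
        exact List.drop_left' hp.2.1
      beta_reduce
      rw [hd1, hd2, List.append_assoc, List.take_left' hp.1.1,
        List.take_left' hp.2.1]
  rw [key, Finset.card_product, Finset.card_product, card_allb]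
  rfl

lemma e0 (n : ℕ) :
    cnt n [true,false,false] + cnt n [true,false,true] + cnt n [true,true,false]
      + cnt n [true,true,true] = 4 * A n := by
  classical
  rw [← bit0_count n]
  have h1 : ((allb (2*n+3)).filter (fun w => (bstep^[n] w).take 1 = [true])).card
      = ∑ b ∈ ({[true,false,false],[true,false,true],[true,true,false],
          [true,true,true]} : Finset (List Bool)),
        (((allb (2*n+3)).filter (fun w => (bstep^[n] w).take 1 = [true])).filter
          (fun w => bstep^[n] w = b)).card := by
    apply Finset.card_eq_sum_card_fiberwise
    intro w hw
    rw [Finset.mem_coe, Finset.mem_filter, mem_allb] at hw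
    simp only [Finset.mem_coe]
    obtain ⟨b0,b1,b2,hb⟩ := List.length_eq_three.mp
      (by rw [length_iter]; omega : (bstep^[n] w).length = 3)
    rw [hb] at hw ⊢
    have hb0 : b0 = true := by simpa using hw.2
    subst hb0
    cases b1 <;> cases b2 <;> decide
  have h2 : ∀ b ∈ ({[true,false,false],[true,false,true],[true,true,false],
      [true,true,true]} : Finset (List Bool)),
      (((allb (2*n+3)).filter (fun w => (bstep^[n] w).take 1 = [true])).filter
        (fun w => bstep^[n] w = b)).card = cnt n b := by
    intro b hb
    have hb1 : b.take 1 = [true] := by fin_cases hb <;> rfl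
    rw [Finset.filter_filter, cnt]
    congr 1
    apply Finset.filter_congr
    intro w _
    constructor
    · exact fun h => h.2
    · intro h; exact ⟨by rw [h, hb1], h⟩
  rw [h1, Finset.sum_congr rfl h2]
  rw [Finset.sum_insert (by decide), Finset.sum_insert (by decide),
    Finset.sum_insert (by decide), Finset.sum_singleton]
  ring

lemma e1 (n : ℕ) :
    cnt n [false,true,false] + cnt n [false,true,true] + cnt n [true,true,false]
      + cnt n [true,true,true] = 4 * A n := by
  classical
  rw [← bit1_count n]
  have h1 : ((allb (2*n+3)).filter
        (fun w => ((bstep^[n] w).drop 1).take 1 = [true])).card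
      = ∑ b ∈ ({[false,true,false],[false,true,true],[true,true,false],
          [true,true,true]} : Finset (List Bool)),
        (((allb (2*n+3)).filter
          (fun w => ((bstep^[n] w).drop 1).take 1 = [true])).filter
          (fun w => bstep^[n] w = b)).card := by
    apply Finset.card_eq_sum_card_fiberwise
    intro w hw
    rw [Finset.mem_coe, Finset.mem_filter, mem_allb] at hw
    simp only [Finset.mem_coe]
    obtain ⟨b0,b1,b2,hb⟩ := List.length_eq_three.mp
      (by rw [length_iter]; omega : (bstep^[n] w).length = 3)
    rw [hb] at hw ⊢
    have hb1 : b1 = true := by simpa using hw.2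
    subst hb1
    cases b0 <;> cases b2 <;> decide
  have h2 : ∀ b ∈ ({[false,true,false],[false,true,true],[true,true,false],
      [true,true,true]} : Finset (List Bool)),
      (((allb (2*n+3)).filter
        (fun w => ((bstep^[n] w).drop 1).take 1 = [true])).filter
        (fun w => bstep^[n] w = b)).card = cnt n b := by
    intro b hb
    have hb1 : (b.drop 1).take 1 = [true] := by fin_cases hb <;> rfl
    rw [Finset.filter_filter, cnt]
    congr 1
    apply Finset.filter_congr
    intro w _
    constructor
    · exact fun h => h.2
    · intro h; exact ⟨by rw [h, hb1], h⟩
  rw [h1, Finset.sum_congr rfl h2]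
  rw [Finset.sum_insert (by decide), Finset.sum_insert (by decide),
    Finset.sum_insert (by decide), Finset.sum_singleton]
  ring

lemma e2 (n : ℕ) :
    cnt n [false,false,true] + cnt n [false,true,true] + cnt n [true,false,true]
      + cnt n [true,true,true] = 4 * A n := by
  classical
  rw [← bit2_count n]
  have h1 : ((allb (2*n+3)).filter (fun w => (bstep^[n] w).drop 2 = [true])).card
      = ∑ b ∈ ({[false,false,true],[false,true,true],[true,false,true],
          [true,true,true]} : Finset (List Bool)),
        (((allb (2*n+3)).filter (fun w => (bstep^[n] w).drop 2 = [true])).filter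
          (fun w => bstep^[n] w = b)).card := by
    apply Finset.card_eq_sum_card_fiberwise
    intro w hw
    rw [Finset.mem_coe, Finset.mem_filter, mem_allb] at hw
    simp only [Finset.mem_coe]
    obtain ⟨b0,b1,b2,hb⟩ := List.length_eq_three.mp
      (by rw [length_iter]; omega : (bstep^[n] w).length = 3)
    rw [hb] at hw ⊢
    have hb2 : b2 = true := by simpa using hw.2
    subst hb2
    cases b0 <;> cases b1 <;> decide
  have h2 : ∀ b ∈ ({[false,false,true],[false,true,true],[true,false,true],
      [true,true,true]} : Finset (List Bool)),
      (((allb (2*n+3)).filter (fun w => (bstep^[n] w).drop 2 = [true])).filter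
        (fun w => bstep^[n] w = b)).card = cnt n b := by
    intro b hb
    have hb1 : b.drop 2 = [true] := by fin_cases hb <;> rfl
    rw [Finset.filter_filter, cnt]
    congr 1
    apply Finset.filter_congr
    intro w _
    constructor
    · exact fun h => h.2
    · intro h; exact ⟨by rw [h, hb1], h⟩
  rw [h1, Finset.sum_congr rfl h2]
  rw [Finset.sum_insert (by decide), Finset.sum_insert (by decide),
    Finset.sum_insert (by decide), Finset.sum_singleton]
  ring

lemma A_zero : A 0 = 1 := by decide

lemma A_succ (n : ℕ) : A (n+1) = cnt n [false,false,true] + cnt n [true,true,true] := by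
  classical
  rw [A, show 2*(n+1)+1 = 2*n+3 by ring]
  have hcong : ∀ v ∈ allb (2*n+3), (bstep^[n+1] v = [true] ↔
      (bstep^[n] v = [false,false,true] ∨ bstep^[n] v = [true,true,true])) := by
    intro v hv
    rw [mem_allb] at hv
    obtain ⟨b0,b1,b2,hb⟩ := List.length_eq_three.mp
      (by rw [length_iter]; omega : (bstep^[n] v).length = 3)
    rw [Function.iterate_succ_apply', hb]
    have hstep : bstep [b0,b1,b2] = [f130 b0 b1 b2] := rfl
    rw [hstep]
    cases b0 <;> cases b1 <;> cases b2 <;> simp [f130]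
  rw [Finset.filter_congr hcong, Finset.filter_or,
    Finset.card_union_of_disjoint (by
      rw [Finset.disjoint_left]
      intro a ha hb
      rw [Finset.mem_filter] at ha hb
      rw [ha.2] at hb
      simpa using hb.2)]
  rfl

lemma A_val (n : ℕ) : 3 * A n = 4^n + 2 := by
  induction n with
  | zero => rw [A_zero]; norm_num
  | succ n ih =>
    have h1 := A_succ n
    have h2 := e2 n
    have h3 := cnt011 n
    have h4 := cnt101 n
    have h5 := cnt111 n
    have h6 : (4:ℕ)^(n+1) = 4 * 4^n := by rw [pow_succ]; ring
    omega

lemma total8 (n : ℕ) :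
    cnt n [false,false,false] + cnt n [false,false,true] + cnt n [false,true,false]
      + cnt n [false,true,true] + cnt n [true,false,false] + cnt n [true,false,true]
      + cnt n [true,true,false] + cnt n [true,true,true] = 2^(2*n+3) := by
  rw [← total_sum n, allb3]
  rw [Finset.sum_insert (by decide), Finset.sum_insert (by decide),
    Finset.sum_insert (by decide), Finset.sum_insert (by decide),
    Finset.sum_insert (by decide), Finset.sum_insert (by decide),
    Finset.sum_insert (by decide), Finset.sum_singleton]
  ring

/-- n-step preimage set of a length-3 block b: binary strings of length 2n+3
mapped to b by n applications of the block evolution operator. -/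
def preim (n : ℕ) (b : List Bool) : Set (List Bool) :=
  {a | a.length = 2*n+3 ∧ bstep^[n] a = b}

theorem stmt4' (n : ℕ) :
    (preim n [false, false, false]).ncard = 4^(n+1) - 3 := by
  have hset : preim n [false, false, false]
      = ↑((allb (2*n+3)).filter (fun w => bstep^[n] w = [false,false,false])) := by
    ext w
    simp only [preim, Set.mem_setOf_eq, Finset.coe_filter, mem_allb]
  rw [hset, Set.ncard_coe_finset]
  have hc : ((allb (2*n+3)).filter
      (fun w => bstep^[n] w = [false,false,false])).card
      = cnt n [false,false,false] := rfl
  rw [hc]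
  have t8 := total8 n
  have h0 := e0 n
  have h1 := e1 n
  have h2 := e2 n
  have u1 := cnt011 n
  have u2 := cnt101 n
  have u3 := cnt110 n
  have u4 := cnt111 n
  have hA := A_val n
  have hp1 : (2:ℕ)^(2*n+3) = 8 * 4^n := by
    rw [pow_add, pow_mul]
    norm_num [mul_comm]
  have hp2 : (4:ℕ)^(n+1) = 4 * 4^n := by rw [pow_succ]; ring
  omega

theorem stmt4 (n : ℕ) (hn : 1 ≤ n) :
    (preim n [false, false, false]).ncard = 4^(n+1) - 3 := stmt4' n
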